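/- The Laplace transform of ℓ(x) = (1/x) e^{−λx} I₁(λx) is Lℓ(s) = λ / (λ + s + √((λ+s)² − λ²)) for s > 0. -/

import Mathlib

open Real MeasureTheory

/-- Modified Bessel function of the first kind of order 1. -/
noncomputable def besselI1 (z : ℝ) : ℝ :=
  ∑' n : ℕ, (z / 2) ^ (2 * n + 1) / ((Nat.factorial n : ℝ) * Nat.factorial (n + 1))

/-- The total-length density `ℓ(x) = (1/x) e^{-λx} I₁(λx)` of an exponential critical
binary Galton-Watson tree. -/
noncomputable def ellDensity (lam x : ℝ) : ℝ :=
  (1 / x) * Real.exp (-lam * x) * besselI1 (lam * x)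

section Aux

open Finset

lemma centralBinom_le_four_pow (n : ℕ) : Nat.centralBinom n ≤ 4 ^ n := by
  induction n with
  | zero => simp [Nat.centralBinom]
  | succ n ih =>
    have h := Nat.succ_mul_centralBinom_succ n
    have h2 : (n + 1) * Nat.centralBinom (n + 1) ≤ (n + 1) * (4 * Nat.centralBinom n) := by
      rw [h]; nlinarith [Nat.centralBinom_pos n]
    have h3 : Nat.centralBinom (n + 1) ≤ 4 * Nat.centralBinom n :=
      Nat.le_of_mul_le_mul_left h2 (Nat.succ_pos n)
    calc Nat.centralBinom (n + 1) ≤ 4 * Nat.centralBinom n := h3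
      _ ≤ 4 * 4 ^ n := by omega
      _ = 4 ^ (n + 1) := by ring

lemma catalan_le_four_pow (n : ℕ) : (catalan n : ℝ) ≤ 4 ^ n := by
  have h1 : catalan n ≤ Nat.centralBinom n := by
    have h := succ_mul_catalan_eq_centralBinom n
    calc catalan n ≤ (n+1) * catalan n := Nat.le_mul_of_pos_left _ (Nat.succ_pos n)
      _ = Nat.centralBinom n := h
  have := centralBinom_le_four_pow n
  have : catalan n ≤ 4 ^ n := le_trans h1 this
  exact_mod_cast this

lemma summable_cat {w : ℝ} (hw0 : 0 ≤ w) (hw : w < 1/4) :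
    Summable (fun n => (catalan n : ℝ) * w ^ n) := by
  refine Summable.of_nonneg_of_le (fun n => by positivity) (fun n => ?_)
    (summable_geometric_of_lt_one (by linarith) (by linarith : 4 * w < 1))
  calc (catalan n : ℝ) * w ^ n ≤ 4 ^ n * w ^ n := by
        exact mul_le_mul_of_nonneg_right (catalan_le_four_pow n) (by positivity)
    _ = (4 * w) ^ n := by rw [mul_pow]

lemma bdiff (n : ℕ) :
    (Nat.centralBinom n : ℝ) / 4 ^ n - (Nat.centralBinom (n+1) : ℝ) / 4 ^ (n+1)
      = (catalan n : ℝ) / (2 * 4 ^ n) := by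
  have h1 : ((n : ℝ) + 1) * (Nat.centralBinom (n+1) : ℝ)
      = 2 * (2 * n + 1) * (Nat.centralBinom n : ℝ) := by
    exact_mod_cast Nat.succ_mul_centralBinom_succ n
  have h2 : ((n : ℝ) + 1) * (catalan n : ℝ) = (Nat.centralBinom n : ℝ) := by
    exact_mod_cast succ_mul_catalan_eq_centralBinom n
  have hn : ((n : ℝ) + 1) ≠ 0 := by positivity
  have key : ((n:ℝ)+1) * ((Nat.centralBinom n : ℝ) / 4 ^ n - (Nat.centralBinom (n+1) : ℝ) / 4 ^ (n+1))
      = ((n:ℝ)+1) * ((catalan n : ℝ) / (2 * 4 ^ n)) := by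
    linear_combination (-1/(4*4^n)) * h1 + (-1/(2*4^n)) * h2
  exact mul_left_cancel₀ hn key

lemma tsum_cat_le {w : ℝ} (hw0 : 0 ≤ w) (hw : w < 1/4) :
    ∑' n, (catalan n : ℝ) * w ^ n ≤ 1 + 4 * w := by
  set r : ℝ := 4 * w with hr
  have hr0 : 0 ≤ r := by positivity
  have hr1 : r < 1 := by rw [hr]; linarith
  set b : ℕ → ℝ := fun n => (Nat.centralBinom n : ℝ) / 4 ^ n with hb
  have hbnonneg : ∀ n, 0 ≤ b n := fun n => by positivity
  have hterm : ∀ n : ℕ, (catalan n : ℝ) * w ^ n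
      = 2 * (b n * r ^ n - b (n+1) * r ^ (n+1)) - 2 * (r ^ n - r ^ (n+1)) * b (n+1) := by
    intro n
    have hd := bdiff n
    have hwr : w ^ n = r ^ n / 4 ^ n := by
      rw [hr, mul_pow]; field_simp
    rw [hwr]
    simp only [hb]
    linear_combination (-2 * r^n) * hd
  refine Real.tsum_le_of_sum_range_le (fun n => by positivity) (fun N => ?_)
  rcases Nat.eq_zero_or_pos N with hN | hN
  · subst hN; simp; positivity
  calc ∑ n ∈ range N, (catalan n : ℝ) * w ^ n
      = ∑ n ∈ range N, (2 * (b n * r ^ n - b (n+1) * r ^ (n+1))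
          - 2 * (r ^ n - r ^ (n+1)) * b (n+1)) := by
        exact Finset.sum_congr rfl fun n _ => hterm n
    _ = 2 * (b 0 * r ^ 0 - b N * r ^ N)
          - ∑ n ∈ range N, 2 * (r ^ n - r ^ (n+1)) * b (n+1) := by
        rw [Finset.sum_sub_distrib, ← Finset.mul_sum,
          Finset.sum_range_sub' (fun n => b n * r ^ n) N]
    _ ≤ 2 * (1 - 0) - 2 * (r ^ 0 - r ^ 1) * b 1 := by
        have h0 : b 0 = 1 := by simp [hb, Nat.centralBinom]
        have hBN : 0 ≤ b N * r ^ N := by positivity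
        have hsingle : 2 * (r ^ 0 - r ^ 1) * b 1 ≤
            ∑ n ∈ range N, 2 * (r ^ n - r ^ (n+1)) * b (n+1) := by
          have := Finset.single_le_sum (f := fun n => 2 * (r ^ n - r ^ (n+1)) * b (n+1))
            (fun n _ => by
              have h5 : r ^ (n+1) ≤ r ^ n := pow_le_pow_of_le_one hr0 hr1.le (Nat.le_succ n)
              have h6 := hbnonneg (n+1)
              nlinarith)
            (Finset.mem_range.mpr hN)
          simpa using this
        rw [h0]
        nlinarith [hsingle]
    _ ≤ 1 + 4 * w := by
        have hb1 : b 1 = 1 / 2 := by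
          norm_num [hb, Nat.centralBinom, Nat.choose]
        rw [hb1]
        have : r ^ 0 = 1 := pow_zero r
        have : r ^ 1 = r := pow_one r
        nlinarith

set_option maxHeartbeats 1000000 in
lemma cat_quadratic {w : ℝ} (hw0 : 0 ≤ w) (hw : w < 1/4) :
    w * (∑' n, (catalan n : ℝ) * w ^ n) ^ 2 = (∑' n, (catalan n : ℝ) * w ^ n) - 1 := by
  set f : ℕ → ℝ := fun n => (catalan n : ℝ) * w ^ n with hf
  have hsum : Summable f := summable_cat hw0 hw
  have hnorm : Summable fun n => ‖f n‖ := by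
    refine hsum.congr fun n => ?_
    rw [Real.norm_eq_abs, abs_of_nonneg (by positivity)]
  have hsq : (∑' n, f n) * (∑' n, f n)
      = ∑' n, ∑ kl ∈ Finset.HasAntidiagonal.antidiagonal n, f kl.1 * f kl.2 :=
    tsum_mul_tsum_eq_tsum_sum_antidiagonal_of_summable_norm hnorm hnorm
  have hinner : ∀ n : ℕ, (∑ kl ∈ Finset.HasAntidiagonal.antidiagonal n, f kl.1 * f kl.2)
      = (catalan (n+1) : ℝ) * w ^ n := by
    intro n
    have hc := catalan_succ' n
    have : (∑ kl ∈ Finset.HasAntidiagonal.antidiagonal n, f kl.1 * f kl.2)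
        = ∑ kl ∈ Finset.HasAntidiagonal.antidiagonal n, ((catalan kl.1 : ℝ) * (catalan kl.2 : ℝ)) * w ^ n := by
      refine Finset.sum_congr rfl fun kl hkl => ?_
      have hkl' : kl.1 + kl.2 = n := Finset.HasAntidiagonal.mem_antidiagonal.mp hkl
      simp only [hf]
      rw [← hkl', pow_add]; ring
    rw [this, ← Finset.sum_mul]
    congr 1
    rw [hc, Nat.cast_sum]
    exact Finset.sum_congr rfl fun kl _ => by push_cast; ring
  have hshift : Summable fun n => (catalan (n+1) : ℝ) * w ^ (n+1) := by
    exact (summable_nat_add_iff 1).mpr hsum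
  have hmul : w * ∑' n, (catalan (n+1) : ℝ) * w ^ n
      = ∑' n, (catalan (n+1) : ℝ) * w ^ (n+1) := by
    rw [← tsum_mul_left]
    exact tsum_congr fun n => by ring
  have hzero : ∑' n, f n = f 0 + ∑' n, f (n+1) := Summable.tsum_eq_zero_add hsum
  have hf0 : f 0 = 1 := by simp [hf]
  calc w * (∑' n, f n) ^ 2 = w * ((∑' n, f n) * (∑' n, f n)) := by ring
    _ = w * ∑' n, (catalan (n+1) : ℝ) * w ^ n := by
        rw [hsq]; congr 1; exact tsum_congr hinner
    _ = ∑' n, (catalan (n+1) : ℝ) * w ^ (n+1) := hmul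
    _ = (∑' n, f n) - 1 := by rw [hzero, hf0]; simp [hf]

lemma cat_closed {w : ℝ} (hw0 : 0 < w) (hw : w < 1/4) :
    ∑' n, (catalan n : ℝ) * w ^ n = (1 - Real.sqrt (1 - 4 * w)) / (2 * w) := by
  set F := ∑' n, (catalan n : ℝ) * w ^ n with hF
  have h1 : w * F ^ 2 = F - 1 := cat_quadratic hw0.le hw
  have h2 : F ≤ 1 + 4 * w := tsum_cat_le hw0.le hw
  have hF0 : 0 ≤ F := tsum_nonneg fun n => by positivity
  have h3 : 2 * w * F < 1 := by nlinarith
  have hsq : (1 - 2 * w * F) ^ 2 = 1 - 4 * w := by linear_combination 4 * w * h1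
  have hsqrt : Real.sqrt (1 - 4 * w) = 1 - 2 * w * F := by
    rw [← hsq, Real.sqrt_sq (by linarith)]
  rw [hsqrt]
  field_simp
  ring

lemma integrable_pow_exp {a : ℝ} (ha : 0 < a) (k : ℕ) :
    IntegrableOn (fun x : ℝ => x ^ k * Real.exp (-(a * x))) (Set.Ioi 0) := by
  have h := integrableOn_rpow_mul_exp_neg_mul_rpow (p := 1) (s := (k : ℝ)) (b := a)
    ((by norm_num : (-1:ℝ) < 0).trans_le (Nat.cast_nonneg k)) one_pos ha
  refine h.congr_fun (fun x hx => ?_) measurableSet_Ioi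
  simp only [Real.rpow_one, Real.rpow_natCast, neg_mul]

lemma integral_pow_exp {a : ℝ} (ha : 0 < a) (k : ℕ) :
    ∫ x in Set.Ioi (0:ℝ), x ^ k * Real.exp (-(a * x)) = (k.factorial : ℝ) / a ^ (k+1) := by
  have h := Real.integral_rpow_mul_exp_neg_mul_Ioi (a := (k : ℝ) + 1) (r := a)
    (by positivity) ha
  have hL : ∫ t in Set.Ioi (0:ℝ), t ^ ((k : ℝ) + 1 - 1) * Real.exp (-(a * t))
      = ∫ x in Set.Ioi (0:ℝ), x ^ k * Real.exp (-(a * x)) := by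
    refine setIntegral_congr_fun measurableSet_Ioi (fun x hx => ?_)
    rw [add_sub_cancel_right, Real.rpow_natCast]
  rw [hL] at h
  rw [h, Real.Gamma_nat_eq_factorial,
    show ((k : ℝ) + 1) = ((k + 1 : ℕ) : ℝ) by push_cast; ring, Real.rpow_natCast]
  rw [div_pow, one_pow]
  ring

lemma cat_fact (n : ℕ) :
    (catalan n : ℝ) * ((n.factorial : ℝ) * ((n+1).factorial : ℝ)) = ((2*n).factorial : ℝ) := by
  have key : catalan n * (n.factorial * (n+1).factorial) = (2*n).factorial := by
    have h1 := succ_mul_catalan_eq_centralBinom n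
    have h2 := Nat.choose_mul_factorial_mul_factorial
      (show n ≤ 2*n by omega)
    have h3 : 2*n - n = n := by omega
    rw [h3] at h2
    calc catalan n * (n.factorial * (n+1).factorial)
        = ((n+1) * catalan n) * (n.factorial * n.factorial) := by
          rw [Nat.factorial_succ]; ring
      _ = Nat.centralBinom n * (n.factorial * n.factorial) := by rw [h1]
      _ = (2*n).choose n * n.factorial * n.factorial := by
          rw [Nat.centralBinom_eq_two_mul_choose]; ring
      _ = (2*n).factorial := h2
  exact_mod_cast key

end Aux

/-- The Laplace transform of `ℓ(x) = (1/x) e^{-λx} I₁(λx)` is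
`Lℓ(s) = λ / (λ + s + √((λ+s)² - λ²))` for `s > 0`. -/
theorem laplace_transform_ellDensity (lam s : ℝ) (hlam : 0 < lam) (hs : 0 < s) :
    ∫ x in Set.Ioi (0 : ℝ), Real.exp (-s * x) * ellDensity lam x
      = lam / (lam + s + Real.sqrt ((lam + s) ^ 2 - lam ^ 2)) := by
  obtain ⟨a, hA⟩ : ∃ a' : ℝ, a' = lam + s := ⟨_, rfl⟩
  rw [← hA]
  have ha : 0 < a := by rw [hA]; linarith
  obtain ⟨Z, hZdef⟩ : ∃ z : ℝ, z = lam / (2 * a) := ⟨_, rfl⟩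
  have hZ0 : 0 < Z := by rw [hZdef]; positivity
  have hZhalf : Z < 1/2 := by
    rw [hZdef, div_lt_iff₀ (by positivity)]
    rw [hA]; linarith
  obtain ⟨w, hwdef⟩ : ∃ w' : ℝ, w' = Z ^ 2 := ⟨_, rfl⟩
  have hw0 : 0 < w := by rw [hwdef]; positivity
  have hw : w < 1/4 := by rw [hwdef]; nlinarith
  set cc : ℕ → ℝ := fun n => (lam/2)^(2*n+1) / ((n.factorial : ℝ) * ((n+1).factorial : ℝ))
    with hcc
  have hccpos : ∀ n, 0 ≤ cc n := fun n => by
    rw [hcc]; positivity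
  set F : ℕ → ℝ → ℝ := fun n x => cc n * (x^(2*n) * Real.exp (-(a*x))) with hFdef
  have hFnonneg : ∀ n x, 0 ≤ F n x := by
    intro n x
    rw [hFdef]
    have hxp : 0 ≤ x ^ (2*n) := Even.pow_nonneg (even_two_mul n) x
    have := hccpos n
    positivity
  -- Step 1: pointwise series expansion
  have step1 : ∀ x ∈ Set.Ioi (0:ℝ),
      Real.exp (-s * x) * ellDensity lam x = ∑' n, F n x := by
    intro x hx
    have hx0 : (0:ℝ) < x := hx
    rw [ellDensity, besselI1]
    rw [show Real.exp (-s*x) * ((1/x) * Real.exp (-lam*x)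
          * ∑' n : ℕ, (lam*x/2)^(2*n+1) / ((n.factorial : ℝ) * ((n+1).factorial : ℝ)))
        = (Real.exp (-s*x) * (1/x) * Real.exp (-lam*x))
          * ∑' n : ℕ, (lam*x/2)^(2*n+1) / ((n.factorial : ℝ) * ((n+1).factorial : ℝ)) from by
      ring, ← tsum_mul_left]
    refine tsum_congr fun n => ?_
    have hexp : Real.exp (-s*x) * Real.exp (-lam*x) = Real.exp (-(a*x)) := by
      rw [← Real.exp_add]; congr 1; rw [hA]; ring
    rw [hFdef, hcc]
    have hpow : (lam*x/2)^(2*n+1) = (lam/2)^(2*n+1) * (x^(2*n) * x) := by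
      rw [show lam*x/2 = (lam/2)*x from by ring, mul_pow, pow_succ x (2*n)]
    rw [hpow]
    have hfacn : ((n.factorial : ℝ) * ((n+1).factorial : ℝ)) ≠ 0 := by positivity
    field_simp
    rw [← Real.exp_add]; congr 1; rw [hA]; ring
  -- Step 2: integrability
  have hInt : ∀ n, Integrable (F n) (volume.restrict (Set.Ioi 0)) := by
    intro n
    rw [hFdef]
    exact ((integrable_pow_exp ha (2*n)).const_mul (cc n))
  -- Step 3: values of the integrals
  have hval : ∀ n, ∫ x in Set.Ioi (0:ℝ), F n x = (catalan n : ℝ) * Z^(2*n+1) := by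
    intro n
    rw [hFdef]
    rw [integral_const_mul, integral_pow_exp ha (2*n)]
    have hfac := cat_fact n
    have hfacn : ((n.factorial : ℝ)) ≠ 0 := by positivity
    have hfacn1 : (((n+1).factorial : ℝ)) ≠ 0 := by positivity
    have han : a ≠ 0 := ha.ne'
    have hcat : (catalan n : ℝ) = ((2*n).factorial : ℝ) / ((n.factorial : ℝ) * ((n+1).factorial : ℝ)) := by
      rw [← hfac]; field_simp
    simp only [hcc]
    rw [hZdef, show lam/(2*a) = (lam/2)/a from by ring, div_pow, hcat]
    field_simp
    ring_nf
    rw [inv_pow, one_div, inv_pow]; field_simp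
  -- Step 4: summability
  have hsumI : Summable (fun n => (catalan n : ℝ) * Z^(2*n+1)) := by
    refine ((summable_cat hw0.le hw).mul_left Z).congr fun n => ?_
    rw [hwdef, ← pow_mul, pow_succ]
    ring
  have hnormsum : Summable fun n => ∫ x in Set.Ioi (0:ℝ), ‖F n x‖ := by
    refine hsumI.congr fun n => ?_
    rw [← hval n]
    refine setIntegral_congr_fun measurableSet_Ioi fun x _ => ?_
    rw [Real.norm_eq_abs, abs_of_nonneg (hFnonneg n x)]
  -- final algebra facts
  obtain ⟨R, hRdef⟩ : ∃ r : ℝ, r = Real.sqrt (a^2 - lam^2) := ⟨_, rfl⟩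
  rw [← hRdef]
  have halam : lam ≤ a := by rw [hA]; linarith
  have hR2 : R^2 = a^2 - lam^2 := by rw [hRdef]; exact Real.sq_sqrt (by nlinarith)
  have hR0 : 0 ≤ R := hRdef ▸ Real.sqrt_nonneg _
  have haR : a + R ≠ 0 := by positivity
  have hsqrtw : Real.sqrt (1 - 4*w) = R / a := by
    have h14 : 1 - 4*w = (R/a)^2 := by
      rw [div_pow, hR2, hwdef, hZdef, div_pow, mul_pow]
      field_simp
      ring
    rw [h14, Real.sqrt_sq (div_nonneg hR0 ha.le)]
  calc ∫ x in Set.Ioi (0:ℝ), Real.exp (-s * x) * ellDensity lam x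
      = ∫ x in Set.Ioi (0:ℝ), ∑' n, F n x :=
        setIntegral_congr_fun measurableSet_Ioi step1
    _ = ∑' n, ∫ x in Set.Ioi (0:ℝ), F n x :=
        (integral_tsum_of_summable_integral_norm hInt hnormsum).symm
    _ = ∑' n, (catalan n : ℝ) * Z^(2*n+1) := tsum_congr hval
    _ = Z * ∑' n, (catalan n : ℝ) * w^n := by
        rw [← tsum_mul_left]
        refine tsum_congr fun n => ?_
        rw [hwdef, ← pow_mul, pow_succ]
        ring
    _ = Z * ((1 - Real.sqrt (1 - 4*w)) / (2*w)) := by rw [cat_closed hw0 hw]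
    _ = lam / (a + R) := by
        rw [hsqrtw, hwdef, hZdef]
        have han : a ≠ 0 := ha.ne'
        have hlamne : lam ≠ 0 := hlam.ne'
        field_simp
        linear_combination (-1) * hR2
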